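/- (Axiom A4 for the nonstandard dilatations in the plane.) Fix θ ∈ ℝ, set z = 1 + iθ ∈ ℂ, and for x ∈ ℂ, ε > 0 define δ^x_ε y = x + ε^z (y − x), with ε^z the principal complex power. Then for all x, u, v ∈ ℂ and all ε > 0, δ^{δ^x_ε u}_{1/ε}( δ^x_ε v ) = x + ε^z (u − x) + (v − u), and consequently δ^{δ^x_ε u}_{1/ε}( δ^x_ε v ) → x + v − u as ε → 0⁺. -/

import Mathlib

/-- The nonstandard dilatation on `ℂ` based at `x`, of coefficient `ε > 0`, associated to
`z = 1 + iθ`: `δ^x_ε y = x + ε^z (y - x)`, with `ε^z` the principal complex power. -/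
noncomputable def nonstdDil (θ : ℝ) (x : ℂ) (ε : ℝ) (y : ℂ) : ℂ :=
  x + (ε : ℂ) ^ ((1 : ℂ) + θ * Complex.I) * (y - x)

lemma inv_mul_cpow (θ : ℝ) {ε : ℝ} (hε : 0 < ε) :
    ((1 / ε : ℝ) : ℂ) ^ ((1 : ℂ) + θ * Complex.I) * (ε : ℂ) ^ ((1 : ℂ) + θ * Complex.I) = 1 := by
  rw [← Complex.mul_cpow_ofReal_nonneg (by positivity) hε.le]
  have h1 : ((1 / ε : ℝ) : ℂ) * (ε : ℂ) = 1 := by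
    push_cast
    field_simp
    exact div_self (Complex.ofReal_ne_zero.2 hε.ne')
  rw [h1, Complex.one_cpow]

/-- Axiom A4 for the nonstandard dilatations in the plane: with `z = 1 + iθ`,
`δ^{δ^x_ε u}_{1/ε}(δ^x_ε v) = x + ε^z (u - x) + (v - u)`, which converges to
`x + v - u` as `ε → 0⁺`. -/
theorem nonstd_dilatations_plane_A4 (θ : ℝ) (x u v : ℂ) :
    (∀ ε : ℝ, 0 < ε →
      nonstdDil θ (nonstdDil θ x ε u) (1 / ε) (nonstdDil θ x ε v)
        = x + (ε : ℂ) ^ ((1 : ℂ) + θ * Complex.I) * (u - x) + (v - u)) ∧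
    Filter.Tendsto (fun ε : ℝ => nonstdDil θ (nonstdDil θ x ε u) (1 / ε) (nonstdDil θ x ε v))
      (nhdsWithin 0 (Set.Ioi 0)) (nhds (x + v - u)) := by
  have key : ∀ ε : ℝ, 0 < ε →
      nonstdDil θ (nonstdDil θ x ε u) (1 / ε) (nonstdDil θ x ε v)
        = x + (ε : ℂ) ^ ((1 : ℂ) + θ * Complex.I) * (u - x) + (v - u) := by
    intro ε hε
    have h := inv_mul_cpow θ hε
    simp only [nonstdDil]
    linear_combination (v - u) * h
  refine ⟨key, ?_⟩
  have htend : Filter.Tendsto (fun ε : ℝ => (ε : ℂ) ^ ((1 : ℂ) + θ * Complex.I))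
      (nhdsWithin 0 (Set.Ioi 0)) (nhds 0) := by
    rw [tendsto_zero_iff_norm_tendsto_zero]
    have heq : ∀ ε ∈ Set.Ioi (0:ℝ), ‖(ε : ℂ) ^ ((1 : ℂ) + θ * Complex.I)‖ = ε := by
      intro ε hε
      rw [Complex.norm_cpow_eq_rpow_re_of_pos hε]
      simp
    refine Filter.Tendsto.congr' ?_ (tendsto_nhdsWithin_of_tendsto_nhds Filter.tendsto_id)
    filter_upwards [self_mem_nhdsWithin] with ε hε using (heq ε hε).symm
  have h2 : Filter.Tendsto
      (fun ε : ℝ => x + (ε : ℂ) ^ ((1 : ℂ) + θ * Complex.I) * (u - x) + (v - u))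
      (nhdsWithin 0 (Set.Ioi 0)) (nhds (x + v - u)) := by
    have := ((htend.mul_const (u - x)).const_add x).add_const (v - u)
    simpa [add_sub_assoc] using this
  refine h2.congr' ?_
  filter_upwards [self_mem_nhdsWithin] with ε hε using (key ε hε).symm
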